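/- arXiv:2102.03816 — 2 statements merged into one kernel-verified Lean document; each statement's English description precedes it below -/
import Mathlib

section
/- Let v ∈ L^∞(ℝ) be nonnegative with v(x) ≤ C/x² for almost all x. Then the lowest Neumann eigenvalue λ₀(L) of -d²/dx² + v on (-L/2, L/2) satisfies λ₀(L) ≤ (4π² + 16C)/L² for all L > 0. -/
open Real Set intervalIntegral

theorem stmt2 (L C : ℝ) (hL : 0 < L) (hC : 0 < C) (v : ℝ → ℝ)
    (hmeas : Measurable v) (hbdd : ∃ B : ℝ, ∀ x, v x ≤ B)
    (hpos : ∀ x, 0 ≤ v x)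
    (hdecay : ∀ᵐ x : ℝ, |v x| ≤ C / x ^ 2) :
    sInf {r : ℝ | ∃ u : ℝ → ℝ, ContDiffOn ℝ 1 u (Set.Icc (-(L/2)) (L/2)) ∧
        (∫ x in (-(L/2))..(L/2), u x ^ 2) ≠ 0 ∧
        r = (∫ x in (-(L/2))..(L/2), ((deriv u x) ^ 2 + v x * u x ^ 2)) /
            (∫ x in (-(L/2))..(L/2), u x ^ 2)} ≤ (4 * π ^ 2 + 16 * C) / L ^ 2 := by
  have hab : -(L/2) ≤ L/2 := by linarith
  set S := {r : ℝ | ∃ u : ℝ → ℝ, ContDiffOn ℝ 1 u (Set.Icc (-(L/2)) (L/2)) ∧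
        (∫ x in (-(L/2))..(L/2), u x ^ 2) ≠ 0 ∧
        r = (∫ x in (-(L/2))..(L/2), ((deriv u x) ^ 2 + v x * u x ^ 2)) /
            (∫ x in (-(L/2))..(L/2), u x ^ 2)} with hS
  -- bounded below by 0
  have hbdd0 : BddBelow S := by
    refine ⟨0, ?_⟩
    rintro r ⟨u, _, hne, rfl⟩
    apply div_nonneg
    · apply intervalIntegral.integral_nonneg hab
      intro x _
      exact add_nonneg (sq_nonneg _) (mul_nonneg (hpos x) (sq_nonneg _))
    · apply intervalIntegral.integral_nonneg hab
      intro x _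
      exact sq_nonneg _
  -- trial function u = id
  have hden : (∫ x in (-(L/2))..(L/2), ((fun y : ℝ => y) x) ^ 2) = L ^ 3 / 12 := by
    simp only
    rw [integral_pow]
    ring
  have hdenne : (L : ℝ) ^ 3 / 12 ≠ 0 := by positivity
  -- integrability of v x * x^2
  have hInt : IntervalIntegrable (fun x => v x * x ^ 2) MeasureTheory.volume (-(L/2)) (L/2) := by
    obtain ⟨B, hB⟩ := hbdd
    rw [intervalIntegrable_iff_integrableOn_Ioc_of_le hab]
    refine MeasureTheory.Integrable.mono' (g := fun _ => |max B 0 * (L / 2) ^ 2|)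
      (MeasureTheory.integrableOn_const measure_Ioc_lt_top.ne)
      ((hmeas.mul (measurable_id.pow_const 2)).aestronglyMeasurable.restrict) ?_
    rw [MeasureTheory.ae_restrict_iff' measurableSet_Ioc]
    refine MeasureTheory.ae_of_all _ (fun x hx => ?_)
    have hx2 : x ^ 2 ≤ (L/2) ^ 2 := by
      have h1 := hx.1
      have h2 := hx.2
      nlinarith
    rw [Real.norm_eq_abs, abs_of_nonneg (mul_nonneg (hpos x) (sq_nonneg x))]
    show v x * x ^ 2 ≤ |max B 0 * (L / 2) ^ 2|
    calc v x * x ^ 2 ≤ (max B 0) * (L/2) ^ 2 :=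
          mul_le_mul ((hB x).trans (le_max_left _ _)) hx2 (sq_nonneg x)
            (le_max_right _ _)
      _ ≤ |max B 0 * (L / 2) ^ 2| := le_abs_self _
  -- a.e. bound v x * x^2 ≤ C
  have haeC : ∀ᵐ x : ℝ, v x * x ^ 2 ≤ C := by
    have hne0 : ∀ᵐ x : ℝ, x ≠ (0 : ℝ) := by
      rw [MeasureTheory.ae_iff]
      simpa using MeasureTheory.measure_singleton (0 : ℝ)
    filter_upwards [hdecay, hne0] with x hx hx0
    have hx2 : (0:ℝ) < x ^ 2 := by positivity
    have : v x ≤ C / x ^ 2 := (le_abs_self _).trans hx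
    calc v x * x ^ 2 ≤ (C / x ^ 2) * x ^ 2 := by nlinarith
      _ = C := by field_simp
  -- bound on J
  have hJle : (∫ x in (-(L/2))..(L/2), v x * x ^ 2) ≤ C * L := by
    have h := intervalIntegral.integral_mono_ae hab hInt
      (_root_.intervalIntegrable_const (c := C)) haeC
    have hc : (∫ _x in (-(L/2))..(L/2), C) = C * L := by
      rw [intervalIntegral.integral_const]
      simp
      ring
    linarith [h, hc.le, hc.ge]
  have hJnn : 0 ≤ (∫ x in (-(L/2))..(L/2), v x * x ^ 2) :=
    intervalIntegral.integral_nonneg hab (fun x _ => mul_nonneg (hpos x) (sq_nonneg x))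
  -- numerator with u = id
  have hnum : (∫ x in (-(L/2))..(L/2), ((deriv (fun y : ℝ => y) x) ^ 2 + v x * ((fun y : ℝ => y) x) ^ 2))
      = L + (∫ x in (-(L/2))..(L/2), v x * x ^ 2) := by
    have hd : (fun x : ℝ => (deriv (fun y : ℝ => y) x) ^ 2 + v x * ((fun y : ℝ => y) x) ^ 2)
        = fun x : ℝ => 1 + v x * x ^ 2 := by
      funext x
      simp
    simp only [hd]
    rw [intervalIntegral.integral_add (_root_.intervalIntegrable_const) hInt]
    rw [intervalIntegral.integral_const]
    simp only [smul_eq_mul, mul_one]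
    ring_nf
  -- membership
  set J := (∫ x in (-(L/2))..(L/2), v x * x ^ 2) with hJ
  have hmem : (L + J) / (L ^ 3 / 12) ∈ S := by
    refine ⟨fun y : ℝ => y, (contDiff_id.contDiffOn), ?_, ?_⟩
    · rw [hden]; exact hdenne
    · rw [hnum, hden]
  have h1 : sInf S ≤ (L + J) / (L ^ 3 / 12) := csInf_le hbdd0 hmem
  have h2 : (L + J) / (L ^ 3 / 12) ≤ (4 * π ^ 2 + 16 * C) / L ^ 2 := by
    rw [div_le_div_iff₀ (by positivity) (by positivity)]
    have hpi : (3:ℝ) < π := Real.pi_gt_three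
    have h9 : (9:ℝ) < π ^ 2 := by nlinarith
    have hL3 : (0:ℝ) < L ^ 3 := by positivity
    have hJL : J * L ^ 2 ≤ C * L * L ^ 2 :=
      mul_le_mul_of_nonneg_right hJle (sq_nonneg L)
    nlinarith [mul_lt_mul_of_pos_right h9 hL3, mul_pos hC hL3]
  linarith
end

section
/- Let v ∈ L^∞(ℝ) be nonnegative with |v(x)| ≤ C/x² a.e. Then the normalized positive Neumann ground state φ of -d²/dx² + v on I = (-L/2, L/2) satisfies sup_{x∈I} |φ(x)| ≤ (1 + √(4π² + 16C))/√L for all L > 0. -/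
open Real Set intervalIntegral

private lemma amgm_aux (t A B : ℝ) (ht : 0 < t) :
    2 * (A * B) ≤ t * A ^ 2 + (1 / t) * B ^ 2 := by
  have ht' : t ≠ 0 := ht.ne'
  have h := sq_nonneg (t * A - B)
  have h2 : 0 ≤ (t * A - B) ^ 2 / t := div_nonneg h ht.le
  have h3 : (t * A - B) ^ 2 / t = t * A ^ 2 + (1 / t) * B ^ 2 - 2 * (A * B) := by
    field_simp
    ring
  linarith

theorem stmt13 (L C : ℝ) (hL : 0 < L) (hC : 0 < C) (v φ : ℝ → ℝ)
    (hmeas : Measurable v) (hbdd : ∃ B : ℝ, ∀ x, v x ≤ B)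
    (hvpos : ∀ x, 0 ≤ v x)
    (hdecay : ∀ᵐ x : ℝ, |v x| ≤ C / x ^ 2)
    (hC1 : ContDiffOn ℝ 1 φ (Set.Icc (-(L/2)) (L/2)))
    (hφpos : ∀ x ∈ Set.Icc (-(L/2)) (L/2), 0 < φ x)
    (hnorm : (∫ x in (-(L/2))..(L/2), φ x ^ 2) = 1)
    (hmin : (∫ x in (-(L/2))..(L/2), ((deriv φ x) ^ 2 + v x * φ x ^ 2)) =
      sInf {r : ℝ | ∃ u : ℝ → ℝ, ContDiffOn ℝ 1 u (Set.Icc (-(L/2)) (L/2)) ∧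
        (∫ x in (-(L/2))..(L/2), u x ^ 2) ≠ 0 ∧
        r = (∫ x in (-(L/2))..(L/2), ((deriv u x) ^ 2 + v x * u x ^ 2)) /
            (∫ x in (-(L/2))..(L/2), u x ^ 2)}) :
    ∀ x ∈ Set.Ioo (-(L/2)) (L/2),
      |φ x| ≤ (1 + Real.sqrt (4 * π ^ 2 + 16 * C)) / Real.sqrt L := by
  intro x hx
  have hπ := Real.pi_gt_three
  have ha : -(L/2) < L/2 := by linarith
  have haI : -(L/2) ≤ L/2 := ha.le
  obtain ⟨K, hKdef⟩ : ∃ K : ℝ, K = 4 * π ^ 2 + 16 * C := ⟨_, rfl⟩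
  rw [← hKdef]
  have hKpos : 0 < K := by rw [hKdef]; positivity
  have hsK : 0 < Real.sqrt K := Real.sqrt_pos.2 hKpos
  have hsL : 0 < Real.sqrt L := Real.sqrt_pos.2 hL
  have hKs : Real.sqrt K * Real.sqrt K = K := Real.mul_self_sqrt hKpos.le
  have hLs : Real.sqrt L * Real.sqrt L = L := Real.mul_self_sqrt hL.le
  set g := derivWithin φ (Set.Icc (-(L/2)) (L/2)) with hgdef
  have hφcont : ContinuousOn φ (Set.Icc (-(L/2)) (L/2)) := hC1.continuousOn
  have hgcont : ContinuousOn g (Set.Icc (-(L/2)) (L/2)) :=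
    hC1.continuousOn_derivWithin (uniqueDiffOn_Icc ha) le_rfl
  have huIcc : uIcc (-(L/2)) (L/2) = Set.Icc (-(L/2)) (L/2) := uIcc_of_le haI
  have hgd : ∀ t ∈ Set.Ioo (-(L/2)) (L/2), HasDerivAt φ (g t) t := by
    intro t ht
    have hN : Set.Icc (-(L/2)) (L/2) ∈ nhds t := Icc_mem_nhds ht.1 ht.2
    have h1 : DifferentiableWithinAt ℝ φ (Set.Icc (-(L/2)) (L/2)) t :=
      (hC1.differentiableOn one_ne_zero) t (Set.Ioo_subset_Icc_self ht)
    have h2 : DifferentiableAt ℝ φ t := h1.differentiableAt hN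
    have h3 : g t = deriv φ t := derivWithin_of_mem_nhds hN
    rw [h3]; exact h2.hasDerivAt
  -- a.e. bound on v * x^2
  have hvx2 : ∀ᵐ t : ℝ, v t * t ^ 2 ≤ C := by
    filter_upwards [hdecay] with t htd
    rcases eq_or_ne t 0 with h | h
    · simp [h]; positivity
    · have ht2 : 0 < t ^ 2 := by positivity
      have h1 : v t ≤ C / t ^ 2 := (le_abs_self _).trans htd
      have := mul_le_mul_of_nonneg_right h1 ht2.le
      rwa [div_mul_cancel₀ _ ht2.ne'] at this
  -- Step 1 : energy bound via test function u = id
  have hE_le : (∫ t in (-(L/2))..(L/2), ((deriv φ t) ^ 2 + v t * φ t ^ 2)) ≤ K / L ^ 2 := by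
    rw [hmin]
    have hD : (∫ t in (-(L/2))..(L/2), t ^ 2) = L ^ 3 / 12 := by
      rw [integral_pow]; ring
    have hDpos : (0:ℝ) < L ^ 3 / 12 := by positivity
    have hIint : IntervalIntegrable (fun t : ℝ => 1 + v t * t ^ 2) MeasureTheory.volume
        (-(L/2)) (L/2) := by
      rw [intervalIntegrable_iff, uIoc_of_le haI]
      refine MeasureTheory.Integrable.mono' (g := fun _ => 1 + C)
        (MeasureTheory.integrableOn_const measure_Ioc_lt_top.ne enorm_ne_top) ?_ ?_
      · exact ((measurable_const.add (hmeas.mul (measurable_id.pow_const 2))).aestronglyMeasurable)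
      · refine MeasureTheory.ae_restrict_of_ae ?_
        filter_upwards [hvx2] with t htd
        have h0 : 0 ≤ v t * t ^ 2 := mul_nonneg (hvpos t) (sq_nonneg t)
        rw [Real.norm_eq_abs, abs_of_nonneg (by linarith)]
        linarith
    have hNum : (∫ t in (-(L/2))..(L/2), (1 + v t * t ^ 2)) ≤ (1 + C) * L := by
      have := intervalIntegral.integral_mono_ae haI hIint
        (_root_.intervalIntegrable_const (c := 1 + C))
        (by filter_upwards [hvx2] with t htd; simpa using by linarith)
      rw [intervalIntegral.integral_const, smul_eq_mul] at this
      calc (∫ t in (-(L/2))..(L/2), (1 + v t * t ^ 2)) ≤ (L/2 - -(L/2)) * (1 + C) := this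
        _ = (1 + C) * L := by ring
    have hmem : ((∫ t in (-(L/2))..(L/2), (1 + v t * t ^ 2)) / (L ^ 3 / 12)) ∈
        {r : ℝ | ∃ u : ℝ → ℝ, ContDiffOn ℝ 1 u (Set.Icc (-(L/2)) (L/2)) ∧
          (∫ x in (-(L/2))..(L/2), u x ^ 2) ≠ 0 ∧
          r = (∫ x in (-(L/2))..(L/2), ((deriv u x) ^ 2 + v x * u x ^ 2)) /
              (∫ x in (-(L/2))..(L/2), u x ^ 2)} := by
      refine ⟨fun t => t, contDiff_id.contDiffOn, by rw [hD]; exact hDpos.ne', ?_⟩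
      rw [hD]
      congr 1
      apply intervalIntegral.integral_congr
      intro t _
      simp
    have hbdd_below : BddBelow {r : ℝ | ∃ u : ℝ → ℝ, ContDiffOn ℝ 1 u (Set.Icc (-(L/2)) (L/2)) ∧
          (∫ x in (-(L/2))..(L/2), u x ^ 2) ≠ 0 ∧
          r = (∫ x in (-(L/2))..(L/2), ((deriv u x) ^ 2 + v x * u x ^ 2)) /
              (∫ x in (-(L/2))..(L/2), u x ^ 2)} := by
      refine ⟨0, ?_⟩
      rintro r ⟨u, -, hu0, rfl⟩
      have hN : 0 ≤ ∫ x in (-(L/2))..(L/2), ((deriv u x) ^ 2 + v x * u x ^ 2) :=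
        intervalIntegral.integral_nonneg haI fun t _ =>
          add_nonneg (sq_nonneg _) (mul_nonneg (hvpos t) (sq_nonneg _))
      have hDn : 0 ≤ ∫ x in (-(L/2))..(L/2), u x ^ 2 :=
        intervalIntegral.integral_nonneg haI fun t _ => sq_nonneg _
      exact div_nonneg hN hDn
    refine le_trans (csInf_le hbdd_below hmem) ?_
    have hNnn : 0 ≤ ∫ t in (-(L/2))..(L/2), (1 + v t * t ^ 2) :=
      intervalIntegral.integral_nonneg haI fun t _ =>
        add_nonneg zero_le_one (mul_nonneg (hvpos t) (sq_nonneg t))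
    calc (∫ t in (-(L/2))..(L/2), (1 + v t * t ^ 2)) / (L ^ 3 / 12)
        ≤ ((1 + C) * L) / (L ^ 3 / 12) := by gcongr
      _ = (12 + 12 * C) / L ^ 2 := by field_simp
      _ ≤ K / L ^ 2 := by
          have h12 : 12 + 12 * C ≤ K := by rw [hKdef]; nlinarith [hπ]
          gcongr
  -- Step 2 : split energy, bound ∫ g²
  have hne : ∀ᵐ t : ℝ, t ≠ L / 2 := by
    refine MeasureTheory.ae_iff.2 ?_
    have : {t : ℝ | ¬ t ≠ L / 2} = {L / 2} := by ext t; simp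
    rw [this]; exact Real.volume_singleton
  have hderiv_eq : ∀ t ∈ Set.Ioo (-(L/2)) (L/2), deriv φ t = g t :=
    fun t ht => (hgd t ht).deriv
  have hIg2 : IntervalIntegrable (fun t => g t ^ 2) MeasureTheory.volume (-(L/2)) (L/2) := by
    apply ContinuousOn.intervalIntegrable
    rw [huIcc]; exact hgcont.pow 2
  have hIφ2 : IntervalIntegrable (fun t => φ t ^ 2) MeasureTheory.volume (-(L/2)) (L/2) := by
    apply ContinuousOn.intervalIntegrable
    rw [huIcc]; exact hφcont.pow 2
  obtain ⟨B, hB⟩ := hbdd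
  obtain ⟨M, hM⟩ := isCompact_Icc.exists_bound_of_continuousOn hφcont
  have hIvφ : IntervalIntegrable (fun t => v t * φ t ^ 2) MeasureTheory.volume (-(L/2)) (L/2) := by
    rw [intervalIntegrable_iff, uIoc_of_le haI]
    refine MeasureTheory.Integrable.mono' (g := fun _ => B * M ^ 2)
      (MeasureTheory.integrableOn_const measure_Ioc_lt_top.ne enorm_ne_top) ?_ ?_
    · exact (hmeas.aemeasurable.mul
        (((hφcont.mono Set.Ioc_subset_Icc_self).aemeasurable measurableSet_Ioc).pow
          aemeasurable_const)).aestronglyMeasurable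
    · refine (MeasureTheory.ae_restrict_iff' measurableSet_Ioc).2 ?_
      filter_upwards with t ht
      have htI : t ∈ Set.Icc (-(L/2)) (L/2) := Set.Ioc_subset_Icc_self ht
      have h1 : |φ t| ≤ M := hM t htI
      have h2 : φ t ^ 2 ≤ M ^ 2 := by nlinarith [abs_nonneg (φ t), sq_abs (φ t)]
      have h0 : 0 ≤ v t * φ t ^ 2 := mul_nonneg (hvpos t) (sq_nonneg _)
      rw [Real.norm_eq_abs, abs_of_nonneg h0]
      exact mul_le_mul (hB t) h2 (sq_nonneg _) ((hvpos t).trans (hB t))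
  have hcongr : (∫ t in (-(L/2))..(L/2), ((deriv φ t) ^ 2 + v t * φ t ^ 2)) =
      (∫ t in (-(L/2))..(L/2), (g t ^ 2 + v t * φ t ^ 2)) := by
    apply intervalIntegral.integral_congr_ae
    filter_upwards [hne] with t htne htmem
    rw [uIoc_of_le haI] at htmem
    rw [hderiv_eq t ⟨htmem.1, lt_of_le_of_ne htmem.2 htne⟩]
  have hvφnn : 0 ≤ ∫ t in (-(L/2))..(L/2), v t * φ t ^ 2 :=
    intervalIntegral.integral_nonneg haI fun t _ => mul_nonneg (hvpos t) (sq_nonneg _)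
  have hg2 : (∫ t in (-(L/2))..(L/2), g t ^ 2) ≤ K / L ^ 2 := by
    have hsplit := intervalIntegral.integral_add hIg2 hIvφ
    rw [hcongr, hsplit] at hE_le
    linarith
  -- Step 3 : min point
  obtain ⟨y, hyI, hymin⟩ := isCompact_Icc.exists_isMinOn (Set.nonempty_Icc.2 haI) hφcont
  have hy2 : φ y ^ 2 * L ≤ 1 := by
    have h1 : (∫ _t in (-(L/2))..(L/2), φ y ^ 2) ≤ ∫ t in (-(L/2))..(L/2), φ t ^ 2 :=
      intervalIntegral.integral_mono_on haI (_root_.intervalIntegrable_const) hIφ2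
        (fun t ht => pow_le_pow_left₀ (hφpos y hyI).le (hymin ht) 2)
    rw [hnorm, intervalIntegral.integral_const, smul_eq_mul] at h1
    nlinarith [h1]
  -- Step 4 : FTC and final bound
  have hF'cont : ContinuousOn (fun t => 2 * φ t * g t) (Set.Icc (-(L/2)) (L/2)) :=
    (continuousOn_const.mul hφcont).mul hgcont
  have hF'int : IntervalIntegrable (fun t => 2 * φ t * g t) MeasureTheory.volume (-(L/2)) (L/2) := by
    apply ContinuousOn.intervalIntegrable; rw [huIcc]; exact hF'cont
  have hFTC : ∀ p ∈ Set.Icc (-(L/2)) (L/2), ∀ q ∈ Set.Icc (-(L/2)) (L/2), p ≤ q →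
      (∫ t in p..q, 2 * φ t * g t) = φ q ^ 2 - φ p ^ 2 := by
    intro p hp q hq hpq
    apply intervalIntegral.integral_eq_sub_of_hasDeriv_right_of_le hpq
    · exact (hφcont.pow 2).mono (Set.Icc_subset_Icc hp.1 hq.2)
    · intro t ht
      have htI : t ∈ Set.Ioo (-(L/2)) (L/2) :=
        ⟨lt_of_le_of_lt hp.1 ht.1, lt_of_lt_of_le ht.2 hq.2⟩
      have := ((hgd t htI).pow 2).hasDerivWithinAt (s := Set.Ioi t)
      convert this using 1
      · rfl
      norm_num
    · exact hF'int.mono_set (by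
        rw [huIcc]
        exact Set.uIcc_subset_Icc hp hq )
  have hxI : x ∈ Set.Icc (-(L/2)) (L/2) := Set.Ioo_subset_Icc_self hx
  have hdiff : φ x ^ 2 - φ y ^ 2 = ∫ t in y..x, 2 * φ t * g t := by
    rcases le_total y x with h | h
    · rw [hFTC y hyI x hxI h]
    · rw [intervalIntegral.integral_symm, hFTC x hxI y hyI h]; ring
  have habsint : IntervalIntegrable (fun t => |2 * φ t * g t|) MeasureTheory.volume
      (-(L/2)) (L/2) := hF'int.abs
  have hsub : Set.uIoc y x ⊆ Set.Ioc (-(L/2)) (L/2) := by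
    intro t ht
    rw [Set.mem_uIoc] at ht
    rcases ht with ⟨h1, h2⟩ | ⟨h1, h2⟩
    · exact ⟨hyI.1.trans_lt h1, h2.trans hxI.2⟩
    · exact ⟨hxI.1.trans_lt h1, h2.trans hyI.2⟩
  have hstep : φ x ^ 2 - φ y ^ 2 ≤ ∫ t in (-(L/2))..(L/2), |2 * φ t * g t| := by
    rw [hdiff]
    have h1 : |∫ t in y..x, 2 * φ t * g t| ≤ ∫ t in Set.uIoc y x, |2 * φ t * g t| := by
      simpa only [Real.norm_eq_abs] using
        intervalIntegral.norm_integral_le_integral_norm_uIoc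
          (a := y) (b := x) (f := fun t => 2 * φ t * g t) (μ := MeasureTheory.volume)
    have h2 : (∫ t in Set.uIoc y x, |2 * φ t * g t|) ≤
        ∫ t in Set.Ioc (-(L/2)) (L/2), |2 * φ t * g t| := by
      apply MeasureTheory.setIntegral_mono_set
      · exact (intervalIntegrable_iff_integrableOn_Ioc_of_le haI).1 habsint
      · filter_upwards with t using abs_nonneg _
      · exact hsub.eventuallyLE
    rw [intervalIntegral.integral_of_le haI]
    exact (le_abs_self _).trans (h1.trans h2)
  set t₀ : ℝ := Real.sqrt K / L with ht₀def
  have ht₀ : 0 < t₀ := div_pos hsK hL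
  have hpt : ∀ t, |2 * φ t * g t| ≤ t₀ * φ t ^ 2 + (1 / t₀) * g t ^ 2 := by
    intro t
    have h3 : |2 * φ t * g t| = 2 * (|φ t| * |g t|) := by
      rw [abs_mul, abs_mul, abs_two]; ring
    rw [h3, ← sq_abs (φ t), ← sq_abs (g t)]
    exact amgm_aux t₀ |φ t| |g t| ht₀
  have hRHSint : IntervalIntegrable (fun t => t₀ * φ t ^ 2 + (1 / t₀) * g t ^ 2)
      MeasureTheory.volume (-(L/2)) (L/2) :=
    (hIφ2.const_mul t₀).add (hIg2.const_mul (1 / t₀))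
  have hint2 : (∫ t in (-(L/2))..(L/2), |2 * φ t * g t|) ≤ 2 * Real.sqrt K / L := by
    have h1 : (∫ t in (-(L/2))..(L/2), |2 * φ t * g t|) ≤
        ∫ t in (-(L/2))..(L/2), (t₀ * φ t ^ 2 + (1 / t₀) * g t ^ 2) :=
      intervalIntegral.integral_mono_on haI habsint hRHSint fun t _ => hpt t
    have h2 : (∫ t in (-(L/2))..(L/2), (t₀ * φ t ^ 2 + (1 / t₀) * g t ^ 2)) =
        t₀ * (∫ t in (-(L/2))..(L/2), φ t ^ 2) +
        (1 / t₀) * ∫ t in (-(L/2))..(L/2), g t ^ 2 := by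
      rw [intervalIntegral.integral_add (hIφ2.const_mul t₀) (hIg2.const_mul (1 / t₀)),
        intervalIntegral.integral_const_mul, intervalIntegral.integral_const_mul]
    have h3 : (1 / t₀) * (∫ t in (-(L/2))..(L/2), g t ^ 2) ≤ (1 / t₀) * (K / L ^ 2) := by
      apply mul_le_mul_of_nonneg_left hg2 (by positivity)
    have h4 : t₀ + (1 / t₀) * (K / L ^ 2) = 2 * Real.sqrt K / L := by
      have hK4 : K / (Real.sqrt K * L) = Real.sqrt K / L := by
        rw [div_eq_div_iff (by positivity) hL.ne']
        linear_combination (-L) * hKs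
      have h5 : L / Real.sqrt K * (K / L ^ 2) = K / (Real.sqrt K * L) := by
        rw [div_mul_div_comm, sq,
          show Real.sqrt K * (L * L) = L * (Real.sqrt K * L) by ring,
          mul_div_mul_left _ _ hL.ne']
      rw [ht₀def, one_div_div, h5, hK4]
      ring
    rw [h2, hnorm] at h1
    linarith
  have h1L : φ y ^ 2 ≤ 1 / L := by rw [le_div_iff₀ hL]; exact hy2
  have hsq : φ x ^ 2 ≤ ((1 + Real.sqrt K) / Real.sqrt L) ^ 2 := by
    have hexp : ((1 + Real.sqrt K) / Real.sqrt L) ^ 2 = (1 + 2 * Real.sqrt K + K) / L := by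
      rw [div_pow]
      have hL2 : Real.sqrt L ^ 2 = L := by rw [sq]; exact hLs
      rw [hL2]
      congr 1
      linear_combination hKs
    rw [hexp]
    have h5 : φ x ^ 2 ≤ 1 / L + 2 * Real.sqrt K / L := by linarith
    have h6 : 1 / L + 2 * Real.sqrt K / L ≤ (1 + 2 * Real.sqrt K + K) / L := by
      have he : (1 + 2 * Real.sqrt K + K) / L = 1 / L + 2 * Real.sqrt K / L + K / L := by
        ring
      have hKL : 0 ≤ K / L := by positivity
      rw [he]
      linarith
    linarith
  have hM0 : (0:ℝ) ≤ (1 + Real.sqrt K) / Real.sqrt L := by positivity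
  have hfin := Real.sqrt_le_sqrt hsq
  rw [Real.sqrt_sq (hφpos x hxI).le, Real.sqrt_sq hM0] at hfin
  rw [abs_of_pos (hφpos x hxI)]
  exact hfin
end
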